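/- Fix n ≥ 1 and let σ be the uniform (normalized surface) probability measure on the unit sphere 𝕊^n ⊂ ℝ^{n+1}. Let φ : [0,π] → ℝ be measurable with ∫∫ φ(d(x,y))² d(x,y)² dσ(y) dσ(x) < ∞. Then ∫∫∫ φ(d(x,y)) φ(d(x,z)) ⟨w(x,y), w(x,z)⟩ dσ(x) dσ(y) dσ(z) = 0. -/

import Mathlib

open MeasureTheory Finset
open scoped ENNReal RealInnerProductSpace

/-- Geodesic distance on the unit sphere: `d(x,y) = arccos⟨x,y⟩`. -/
noncomputable def sphereDist {n : ℕ} (x y : EuclideanSpace ℝ (Fin (n + 1))) : ℝ :=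
  Real.arccos ⟪x, y⟫

open Classical in
/-- The influence vector on the unit sphere:
`w(x,y) = d(x,y)·(y − ⟨x,y⟩x)/‖y − ⟨x,y⟩x‖` if `y ≠ ±x`, and `0` otherwise. -/
noncomputable def sphereW {n : ℕ} (x y : EuclideanSpace ℝ (Fin (n + 1))) :
    EuclideanSpace ℝ (Fin (n + 1)) :=
  if y = x ∨ y = -x then 0
  else sphereDist x y • (‖y - ⟪x, y⟫ • x‖⁻¹ • (y - ⟪x, y⟫ • x))

section Aux

variable {n : ℕ}

lemma sphereDist_nonneg' (x y : EuclideanSpace ℝ (Fin (n + 1))) : 0 ≤ sphereDist x y :=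
  Real.arccos_nonneg _

lemma measurable_sphereDist' :
    Measurable (fun p : EuclideanSpace ℝ (Fin (n + 1)) × EuclideanSpace ℝ (Fin (n + 1)) =>
      sphereDist p.1 p.2) := by
  apply Real.continuous_arccos.measurable.comp
  exact (continuous_inner.comp (continuous_fst.prodMk continuous_snd)).measurable

lemma measurable_sphereW' :
    Measurable (fun p : EuclideanSpace ℝ (Fin (n + 1)) × EuclideanSpace ℝ (Fin (n + 1)) =>
      sphereW p.1 p.2) := by
  classical
  unfold sphereW
  apply Measurable.ite
  · have h1 : IsClosed {p : EuclideanSpace ℝ (Fin (n + 1)) × EuclideanSpace ℝ (Fin (n + 1)) |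
        p.2 = p.1 ∨ p.2 = -p.1} := by
      have : {p : EuclideanSpace ℝ (Fin (n + 1)) × EuclideanSpace ℝ (Fin (n + 1)) |
          p.2 = p.1 ∨ p.2 = -p.1} =
          {p | p.2 = p.1} ∪ {p | p.2 = -p.1} := by ext p; simp [Set.mem_setOf_eq]
      rw [this]
      exact (isClosed_eq continuous_snd continuous_fst).union
        (isClosed_eq continuous_snd continuous_fst.neg)
    exact h1.measurableSet
  · exact measurable_const
  · have hv : Continuous (fun p : EuclideanSpace ℝ (Fin (n + 1)) ×
        EuclideanSpace ℝ (Fin (n + 1)) => p.2 - ⟪p.1, p.2⟫ • p.1) := by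
      exact continuous_snd.sub (((continuous_inner (𝕜 := ℝ)).comp
        (continuous_fst.prodMk continuous_snd)).smul continuous_fst)
    exact measurable_sphereDist'.smul ((hv.norm.measurable.inv).smul hv.measurable)

lemma norm_sphereW_le' (x y : EuclideanSpace ℝ (Fin (n + 1))) :
    ‖sphereW x y‖ ≤ sphereDist x y := by
  classical
  unfold sphereW
  split_ifs with h
  · simpa using sphereDist_nonneg' x y
  · set v := y - ⟪x, y⟫ • x with hv
    rw [norm_smul, norm_smul, norm_inv, norm_norm, Real.norm_eq_abs,
      abs_of_nonneg (sphereDist_nonneg' x y)]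
    rcases eq_or_ne v 0 with h0 | h0
    · simp [h0, sphereDist_nonneg' x y]
    · rw [inv_mul_cancel₀ (norm_ne_zero_iff.mpr h0), mul_one]

lemma exists_reflection' (x : EuclideanSpace ℝ (Fin (n + 1))) (hx : ‖x‖ = 1) :
    ∃ O : EuclideanSpace ℝ (Fin (n + 1)) ≃ₗᵢ[ℝ] EuclideanSpace ℝ (Fin (n + 1)),
      ∀ y, O y = (2 * ⟪x, y⟫) • x - y := by
  refine ⟨Submodule.reflection (ℝ ∙ x), fun y => ?_⟩
  rw [Submodule.reflection_apply, Submodule.starProjection_singleton]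
  rw [hx]
  norm_num
  module

lemma reflection_props' (x : EuclideanSpace ℝ (Fin (n + 1))) (hx : ‖x‖ = 1)
    (O : EuclideanSpace ℝ (Fin (n + 1)) ≃ₗᵢ[ℝ] EuclideanSpace ℝ (Fin (n + 1)))
    (hO : ∀ y, O y = (2 * ⟪x, y⟫) • x - y) (y : EuclideanSpace ℝ (Fin (n + 1))) :
    sphereDist x (O y) = sphereDist x y ∧ sphereW x (O y) = -sphereW x y := by
  classical
  have hxx : ⟪x, x⟫ = 1 := by
    rw [real_inner_self_eq_norm_sq, hx]; norm_num
  have hinner : ⟪x, O y⟫ = ⟪x, y⟫ := by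
    rw [hO, inner_sub_right, real_inner_smul_right, hxx]
    ring
  have hdist : sphereDist x (O y) = sphereDist x y := by
    rw [sphereDist, hinner, sphereDist]
  refine ⟨hdist, ?_⟩
  have hcond : (O y = x ∨ O y = -x) ↔ (y = x ∨ y = -x) := by
    have hOx : O x = x := by rw [hO, hxx]; module
    have hOnx : O (-x) = -x := by rw [hO, inner_neg_right, hxx]; module
    constructor
    · rintro (h | h)
      · left; have := congrArg O.symm h
        rwa [O.symm_apply_apply, ← hOx, O.symm_apply_apply] at this
      · right; have := congrArg O.symm h
        rwa [O.symm_apply_apply, ← hOnx, O.symm_apply_apply] at this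
    · rintro (rfl | rfl)
      · left; exact hOx
      · right; exact hOnx
  have hvec : O y - ⟪x, y⟫ • x = -(y - ⟪x, y⟫ • x) := by
    rw [hO]; module
  unfold sphereW
  rw [hinner, hdist]
  by_cases h : y = x ∨ y = -x
  · rw [if_pos (hcond.mpr h), if_pos h, neg_zero]
  · rw [if_neg (fun hc => h (hcond.mp hc)), if_neg h, hvec, norm_neg, smul_neg, smul_neg]

lemma integral_phi_w_zero (σ : Measure (EuclideanSpace ℝ (Fin (n + 1))))
    [IsProbabilityMeasure σ]
    (hσinv : ∀ O : EuclideanSpace ℝ (Fin (n + 1)) ≃ₗᵢ[ℝ] EuclideanSpace ℝ (Fin (n + 1)),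
      Measure.map O σ = σ)
    (φ : ℝ → ℝ) (x : EuclideanSpace ℝ (Fin (n + 1))) (hx : ‖x‖ = 1)
    (hF : Integrable (fun z => φ (sphereDist x z) • sphereW x z) σ) :
    ∫ z, φ (sphereDist x z) • sphereW x z ∂σ = 0 := by
  obtain ⟨O, hO⟩ := exists_reflection' x hx
  set F := fun z => φ (sphereDist x z) • sphereW x z with hFdef
  have h1 : ∫ z, F z ∂σ = ∫ z, F (O z) ∂σ := by
    conv_lhs => rw [← hσinv O]
    rw [integral_map O.continuous.aemeasurable]
    rw [hσinv O]
    exact hF.aestronglyMeasurable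
  have h2 : ∀ z, F (O z) = -F z := fun z => by
    obtain ⟨hd, hw⟩ := reflection_props' x hx O hO z
    simp only [hFdef, hd, hw, smul_neg]
  simp only [h2] at h1
  rw [integral_neg] at h1
  have h3 : (2 : ℝ) • ∫ z, F z ∂σ = 0 := by
    rw [two_smul]
    nth_rewrite 1 [h1]
    simp
  rcases smul_eq_zero.mp h3 with h | h
  · norm_num at h
  · exact h

lemma measurable_sphereDist_left (x : EuclideanSpace ℝ (Fin (n + 1))) :
    Measurable (fun z : EuclideanSpace ℝ (Fin (n + 1)) => sphereDist x z) := by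
  have : Continuous (fun z : EuclideanSpace ℝ (Fin (n + 1)) => sphereDist x z) :=
    Real.continuous_arccos.comp (Continuous.inner continuous_const continuous_id)
  exact this.measurable

lemma measurable_sphereW_left (x : EuclideanSpace ℝ (Fin (n + 1))) :
    Measurable (fun z : EuclideanSpace ℝ (Fin (n + 1)) => sphereW x z) := by
  classical
  unfold sphereW
  apply Measurable.ite
  · have h1 : IsClosed {z : EuclideanSpace ℝ (Fin (n + 1)) | z = x ∨ z = -x} := by
      have : {z : EuclideanSpace ℝ (Fin (n + 1)) | z = x ∨ z = -x} =
          {z | z = x} ∪ {z | z = -x} := by ext z; simp [Set.mem_setOf_eq, or_comm]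
      rw [this]
      exact (isClosed_eq continuous_id continuous_const).union
        (isClosed_eq continuous_id continuous_const)
    exact h1.measurableSet
  · exact measurable_const
  · have hv : Continuous (fun z : EuclideanSpace ℝ (Fin (n + 1)) =>
        z - ⟪x, z⟫ • x) := by
      exact continuous_id.sub ((Continuous.inner (𝕜 := ℝ) continuous_const continuous_id).smul
        continuous_const)
    exact (measurable_sphereDist_left x).smul ((hv.norm.measurable.inv).smul hv.measurable)

end Aux

/-- Abbreviation for the ambient Euclidean space. -/
abbrev Esp (n : ℕ) := EuclideanSpace ℝ (Fin (n + 1))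

/-- the cross term vanishes for particles uniformly distributed on the
sphere: `∫∫∫ φ(d(x,y))φ(d(x,z))⟨w(x,y),w(x,z)⟩ dσ(x)dσ(y)dσ(z) = 0`. -/
theorem sphere_crossTerm_zero
    (n : ℕ) (hn : 1 ≤ n)
    (σ : Measure (EuclideanSpace ℝ (Fin (n + 1)))) [IsProbabilityMeasure σ]
    (hσsphere : σ (Metric.sphere (0 : EuclideanSpace ℝ (Fin (n + 1))) 1)ᶜ = 0)
    (hσinv : ∀ O : EuclideanSpace ℝ (Fin (n + 1)) ≃ₗᵢ[ℝ] EuclideanSpace ℝ (Fin (n + 1)),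
      Measure.map O σ = σ)
    (φ : ℝ → ℝ) (hφ : Measurable φ)
    (hint : Integrable (fun p : EuclideanSpace ℝ (Fin (n + 1)) ×
        EuclideanSpace ℝ (Fin (n + 1)) =>
      (φ (sphereDist p.1 p.2)) ^ 2 * (sphereDist p.1 p.2) ^ 2) (σ.prod σ)) :
    ∫ p : EuclideanSpace ℝ (Fin (n + 1)) ×
        (EuclideanSpace ℝ (Fin (n + 1)) × EuclideanSpace ℝ (Fin (n + 1))),
      φ (sphereDist p.1 p.2.1) * φ (sphereDist p.1 p.2.2) *
        ⟪sphereW p.1 p.2.1, sphereW p.1 p.2.2⟫ ∂(σ.prod (σ.prod σ)) = 0 := by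
  classical
  set f : Esp n × (Esp n × Esp n) → ℝ := fun p =>
    φ (sphereDist p.1 p.2.1) * φ (sphereDist p.1 p.2.2) *
      ⟪sphereW p.1 p.2.1, sphereW p.1 p.2.2⟫ with hfdef
  -- measurability of f
  have hmeas_f : Measurable f := by
    have h1 : Measurable (fun p : Esp n × (Esp n × Esp n) => (p.1, p.2.1)) :=
      measurable_fst.prodMk (measurable_fst.comp measurable_snd)
    have h2 : Measurable (fun p : Esp n × (Esp n × Esp n) => (p.1, p.2.2)) :=
      measurable_fst.prodMk (measurable_snd.comp measurable_snd)
    exact (((hφ.comp (measurable_sphereDist'.comp h1)).mul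
      (hφ.comp (measurable_sphereDist'.comp h2))).mul
      (continuous_inner.measurable.comp ((measurable_sphereW'.comp h1).prodMk
        (measurable_sphereW'.comp h2))))
  -- measure preserving projections
  have hmp1 : MeasurePreserving (fun p : Esp n × (Esp n × Esp n) => (p.1, p.2.1))
      (σ.prod (σ.prod σ)) (σ.prod σ) := by
    have hfst : MeasurePreserving (Prod.fst : Esp n × Esp n → Esp n) (σ.prod σ) σ :=
      ⟨measurable_fst, by rw [Measure.map_fst_prod]; simp⟩
    exact (MeasurePreserving.id σ).prod hfst
  have hmp2 : MeasurePreserving (fun p : Esp n × (Esp n × Esp n) => (p.1, p.2.2))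
      (σ.prod (σ.prod σ)) (σ.prod σ) := by
    have hsnd : MeasurePreserving (Prod.snd : Esp n × Esp n → Esp n) (σ.prod σ) σ :=
      ⟨measurable_snd, by rw [Measure.map_snd_prod]; simp⟩
    exact (MeasurePreserving.id σ).prod hsnd
  -- integrability of f
  have hG1 : Integrable (fun p : Esp n × (Esp n × Esp n) =>
      (φ (sphereDist p.1 p.2.1)) ^ 2 * (sphereDist p.1 p.2.1) ^ 2) (σ.prod (σ.prod σ)) :=
    (hmp1.integrable_comp hint.aestronglyMeasurable).mpr hint
  have hG2 : Integrable (fun p : Esp n × (Esp n × Esp n) =>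
      (φ (sphereDist p.1 p.2.2)) ^ 2 * (sphereDist p.1 p.2.2) ^ 2) (σ.prod (σ.prod σ)) :=
    (hmp2.integrable_comp hint.aestronglyMeasurable).mpr hint
  have hf_int : Integrable f (σ.prod (σ.prod σ)) := by
    apply Integrable.mono' (((hG1.add hG2).div_const 2)) hmeas_f.aestronglyMeasurable
    filter_upwards with p
    have hw1 := norm_sphereW_le' p.1 p.2.1
    have hw2 := norm_sphereW_le' p.1 p.2.2
    have hd1 := sphereDist_nonneg' p.1 p.2.1
    have hd2 := sphereDist_nonneg' p.1 p.2.2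
    have hi : |⟪sphereW p.1 p.2.1, sphereW p.1 p.2.2⟫| ≤
        ‖sphereW p.1 p.2.1‖ * ‖sphereW p.1 p.2.2‖ := abs_real_inner_le_norm _ _
    have key : |f p| ≤ |φ (sphereDist p.1 p.2.1)| * |φ (sphereDist p.1 p.2.2)| *
        (sphereDist p.1 p.2.1 * sphereDist p.1 p.2.2) := by
      rw [hfdef]
      simp only
      rw [abs_mul, abs_mul]
      have h1 : ‖sphereW p.1 p.2.1‖ * ‖sphereW p.1 p.2.2‖ ≤
          sphereDist p.1 p.2.1 * sphereDist p.1 p.2.2 :=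
        mul_le_mul hw1 hw2 (norm_nonneg _) hd1
      have := hi.trans h1
      exact mul_le_mul_of_nonneg_left this (by positivity)
    rw [Real.norm_eq_abs]
    refine key.trans ?_
    set a := |φ (sphereDist p.1 p.2.1)| * sphereDist p.1 p.2.1 with ha
    set b := |φ (sphereDist p.1 p.2.2)| * sphereDist p.1 p.2.2 with hb
    have habs : |φ (sphereDist p.1 p.2.1)| * |φ (sphereDist p.1 p.2.2)| *
        (sphereDist p.1 p.2.1 * sphereDist p.1 p.2.2) = a * b := by ring
    have ha2 : a ^ 2 = (φ (sphereDist p.1 p.2.1)) ^ 2 * (sphereDist p.1 p.2.1) ^ 2 := by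
      rw [ha, mul_pow, sq_abs]
    have hb2 : b ^ 2 = (φ (sphereDist p.1 p.2.2)) ^ 2 * (sphereDist p.1 p.2.2) ^ 2 := by
      rw [hb, mul_pow, sq_abs]
    simp only [Pi.add_apply]
    rw [habs, ← ha2, ← hb2]
    nlinarith [sq_nonneg (a - b)]
  -- main computation
  show ∫ p, f p ∂(σ.prod (σ.prod σ)) = 0
  rw [MeasureTheory.integral_prod _ hf_int]
  have hsphere_ae : ∀ᵐ x ∂σ, ‖x‖ = 1 := by
    have : ∀ᵐ x ∂σ, x ∈ Metric.sphere (0 : Esp n) 1 := by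
      rw [MeasureTheory.ae_iff]
      convert hσsphere using 2
      rfl
    filter_upwards [this] with x hx
    simpa [mem_sphere_iff_norm] using hx
  have hsec : ∀ᵐ x ∂σ, Integrable
      (fun y => (φ (sphereDist x y)) ^ 2 * (sphereDist x y) ^ 2) σ :=
    hint.prod_right_ae
  have hae : ∀ᵐ x ∂σ, ∫ q : Esp n × Esp n, f (x, q) ∂(σ.prod σ) = 0 := by
    filter_upwards [hsphere_ae, hsec] with x hx hx2
    set F : Esp n → Esp n := fun z => φ (sphereDist x z) • sphereW x z with hFdef
    have hFmeas : Measurable F := by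
      exact (hφ.comp (measurable_sphereDist_left x)).smul (measurable_sphereW_left x)
    have hFint : Integrable F σ := by
      apply Integrable.mono'
        (((integrable_const (1 : ℝ)).add hx2).div_const 2) hFmeas.aestronglyMeasurable
      filter_upwards with z
      have hw := norm_sphereW_le' x z
      have hd := sphereDist_nonneg' x z
      have h1 : ‖F z‖ ≤ |φ (sphereDist x z)| * sphereDist x z := by
        rw [hFdef]
        simp only
        rw [norm_smul, Real.norm_eq_abs]
        exact mul_le_mul_of_nonneg_left hw (abs_nonneg _)
      refine h1.trans ?_
      set a := |φ (sphereDist x z)| * sphereDist x z with ha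
      have ha2 : a ^ 2 = (φ (sphereDist x z)) ^ 2 * (sphereDist x z) ^ 2 := by
        rw [ha, mul_pow, sq_abs]
      simp only [Pi.add_apply]
      rw [← ha2]
      nlinarith [sq_nonneg (a - 1)]
    have hFzero : ∫ z, F z ∂σ = 0 := integral_phi_w_zero σ hσinv φ x hx hFint
    have hrw : ∀ q : Esp n × Esp n, f (x, q) = ⟪F q.1, F q.2⟫ := by
      intro q
      rw [hfdef, hFdef]
      simp only [real_inner_smul_left, real_inner_smul_right]
      ring
    rw [show (fun q : Esp n × Esp n => f (x, q)) = fun q => ⟪F q.1, F q.2⟫ from funext hrw]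
    have hinner_int : Integrable (fun q : Esp n × Esp n => ⟪F q.1, F q.2⟫) (σ.prod σ) := by
      apply Integrable.mono' (hFint.norm.mul_prod hFint.norm)
      · exact (continuous_inner.measurable.comp
          ((hFmeas.comp measurable_fst).prodMk
            (hFmeas.comp measurable_snd))).aestronglyMeasurable
      · filter_upwards with q
        rw [Real.norm_eq_abs]
        exact abs_real_inner_le_norm _ _
    rw [MeasureTheory.integral_prod _ hinner_int]
    have : ∀ y : Esp n, ∫ z, ⟪F y, F z⟫ ∂σ = 0 := by
      intro y
      rw [integral_inner hFint, hFzero, inner_zero_right]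
    simp only [this, integral_zero]
  rw [integral_congr_ae hae]
  simp
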